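/- arXiv:2011.08267 — 2 statements merged into one kernel-verified Lean document; each statement's English description precedes it below -/
import Mathlib

section
/- Let σ ∈ ℂ with Re σ > 0, let 0 ≤ β < γ ≤ 2π and R > 0. Let C = { w ∈ ℂ : Re w < log R and β < Im(w/σ) < γ }. Then ∫_C e^{2·Re w} dA(w) = ((γ − β)·|σ|² / (2·Re σ)) · R², where dA is two-dimensional Lebesgue measure on ℂ. (Proposition 3.3, first formula: this integral is the area, counted with multiplicity, of the region A = exp(C) bounded by the two logarithmic spirals Γ_β, Γ_γ — the images of the rays arg z = β and arg z = γ under z ↦ z^σ — and the circle |z| = R.) -/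
open Real MeasureTheory Set

lemma integrableOn_exp_two_mul_Iic (c : ℝ) :
    IntegrableOn (fun x => Real.exp (2 * x)) (Iic c) := by
  have hm : AEStronglyMeasurable (fun x => Real.exp (2 * x))
      (volume.restrict (Iic c)) :=
    (Real.continuous_exp.comp (continuous_const.mul continuous_id)).aestronglyMeasurable
  refine Integrable.mono ((integrableOn_exp_Iic c).const_mul (Real.exp c)) hm ?_
  filter_upwards [ae_restrict_mem measurableSet_Iic] with x hx
  rw [Real.norm_eq_abs, Real.norm_eq_abs, abs_of_pos (Real.exp_pos _),
    abs_of_pos (by positivity), show (2:ℝ) * x = x + x by ring, Real.exp_add]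
  exact mul_le_mul_of_nonneg_right (Real.exp_le_exp.2 hx) (Real.exp_pos x).le

lemma integral_exp_two_mul_Iic (c : ℝ) :
    ∫ x in Iic c, Real.exp (2 * x) = Real.exp (2 * c) / 2 := by
  have h := integral_Iic_of_hasDerivAt_of_tendsto'
    (f := fun x : ℝ => Real.exp (2 * x) / 2) (f' := fun x : ℝ => Real.exp (2 * x))
    (a := c) (m := 0) ?_ (integrableOn_exp_two_mul_Iic c) ?_
  · rw [h, sub_zero]
  · intro x _
    have h1 : HasDerivAt (fun x : ℝ => Real.exp (2 * x)) (Real.exp (2 * x) * 2) x := by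
      simpa [Function.comp_def] using (Real.hasDerivAt_exp (2 * x)).comp x ((hasDerivAt_id x).const_mul 2)
    have h2 := h1.div_const 2
    simpa [mul_div_assoc] using h2
  · have ht : Filter.Tendsto (fun x : ℝ => 2 * x) Filter.atBot Filter.atBot :=
      Filter.tendsto_id.const_mul_atBot two_pos
    simpa using (Real.tendsto_exp_atBot.comp ht).div_const 2

/-- Proposition 3.3, first formula: with `C = {w : Re w < log R, β < Im (w/σ) < γ}`,
`∫_C e^{2 Re w} dA(w) = (γ-β)|σ|²/(2 Re σ) · R²`; this integral is the area, with
multiplicity, of the region bounded by the logarithmic spirals `Γ_β`, `Γ_γ` and the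
circle `|z| = R`. -/
theorem area_between_log_spirals (σ : ℂ) (hσ : 0 < σ.re) (β γ R : ℝ)
    (hβ : 0 ≤ β) (hβγ : β < γ) (hγ : γ ≤ 2 * π) (hR : 0 < R) :
    ∫ w in {w : ℂ | w.re < Real.log R ∧ β < (w / σ).im ∧ (w / σ).im < γ},
        Real.exp (2 * w.re)
      = (γ - β) * ‖σ‖ ^ 2 / (2 * σ.re) * R ^ 2 := by
  have hσ0 : σ ≠ 0 := fun h => by simp [h] at hσ
  have ha : 0 < σ.re := hσ
  have hs : 0 < Complex.normSq σ := Complex.normSq_pos.2 hσ0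
  set b := σ.im with hb
  set s := Complex.normSq σ with hsdef
  set c0 : ℝ := (γ - β) * s / σ.re with hc0
  have hc0pos : 0 < c0 := by
    apply div_pos (mul_pos (sub_pos.2 hβγ) hs) ha
  set S : Set ℂ := {w : ℂ | w.re < Real.log R ∧ β < (w / σ).im ∧ (w / σ).im < γ} with hS
  -- the corresponding region in ℝ × ℝ
  set T : Set (ℝ × ℝ) := {p : ℝ × ℝ | p.1 < Real.log R ∧
      (β * s + b * p.1) / σ.re < p.2 ∧ p.2 < (γ * s + b * p.1) / σ.re} with hT
  have hTm : MeasurableSet T := by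
    rw [hT]
    simp only [Set.setOf_and]
    exact (measurableSet_lt measurable_fst measurable_const).inter
      ((measurableSet_lt (by fun_prop) measurable_snd).inter
        (measurableSet_lt measurable_snd (by fun_prop)))
  have hpre : Complex.measurableEquivRealProd.symm ⁻¹' S = T := by
    ext p
    simp only [mem_preimage, Complex.measurableEquivRealProd_symm_apply, hS, hT,
      mem_setOf_eq, Complex.div_im]
    constructor
    · rintro ⟨h1, h2, h3⟩
      refine ⟨h1, ?_, ?_⟩
      · rw [div_lt_iff₀ ha]
        have h2' : β * s < p.2 * σ.re - p.1 * b := by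
          have := (lt_div_iff₀ hs).1 (by
            have : p.2 * σ.re / s - p.1 * b / s = (p.2 * σ.re - p.1 * b) / s := by ring
            rw [← this]; exact h2)
          linarith
        linarith
      · rw [lt_div_iff₀ ha]
        have h3' : p.2 * σ.re - p.1 * b < γ * s := by
          have : p.2 * σ.re / s - p.1 * b / s = (p.2 * σ.re - p.1 * b) / s := by ring
          rw [this] at h3
          have := (div_lt_iff₀ hs).1 h3
          linarith
        linarith
    · rintro ⟨h1, h2, h3⟩
      refine ⟨h1, ?_, ?_⟩
      · have h2' : β * s + b * p.1 < p.2 * σ.re := (div_lt_iff₀ ha).1 h2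
        have : β < (p.2 * σ.re - p.1 * b) / s := (lt_div_iff₀ hs).2 (by linarith)
        calc β < (p.2 * σ.re - p.1 * b) / s := this
          _ = p.2 * σ.re / s - p.1 * b / s := by ring
      · have h3' : p.2 * σ.re < γ * s + b * p.1 := (lt_div_iff₀ ha).1 h3
        have : (p.2 * σ.re - p.1 * b) / s < γ := (div_lt_iff₀ hs).2 (by linarith)
        calc p.2 * σ.re / s - p.1 * b / s = (p.2 * σ.re - p.1 * b) / s := by ring
          _ < γ := this
  have key : ∫⁻ w in S, ENNReal.ofReal (Real.exp (2 * w.re)) =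
      ENNReal.ofReal ((γ - β) * s / (2 * σ.re) * R ^ 2) := by
    rw [← (Complex.volume_preserving_equiv_real_prod.symm _).setLIntegral_comp_preimage_emb
      Complex.measurableEquivRealProd.symm.measurableEmbedding
      (fun w => ENNReal.ofReal (Real.exp (2 * w.re))) S, hpre]
    have hre : ∀ p : ℝ × ℝ, (Complex.measurableEquivRealProd.symm p).re = p.1 := fun p => rfl
    simp only [hre]
    rw [← lintegral_indicator hTm, Measure.volume_eq_prod,
      lintegral_prod _ (((show Measurable fun p : ℝ × ℝ => ENNReal.ofReal (Real.exp (2 * p.1))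
        by fun_prop).indicator hTm).aemeasurable)]
    have inner : ∀ x : ℝ, (∫⁻ y, T.indicator
          (fun p : ℝ × ℝ => ENNReal.ofReal (Real.exp (2 * p.1))) (x, y)) =
        (Iio (Real.log R)).indicator (fun x => ENNReal.ofReal (Real.exp (2 * x) * c0)) x := by
      intro x
      by_cases hx : x < Real.log R
      · have heq : (fun y => T.indicator
            (fun p : ℝ × ℝ => ENNReal.ofReal (Real.exp (2 * p.1))) (x, y)) =
            (Ioo ((β * s + b * x) / σ.re) ((γ * s + b * x) / σ.re)).indicator
              (fun _ => ENNReal.ofReal (Real.exp (2 * x))) := by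
          funext y
          by_cases hy : y ∈ Ioo ((β * s + b * x) / σ.re) ((γ * s + b * x) / σ.re)
          · rw [indicator_of_mem hy, indicator_of_mem]
            exact ⟨hx, hy.1, hy.2⟩
          · rw [indicator_of_notMem hy, indicator_of_notMem]
            intro hmem
            exact hy ⟨hmem.2.1, hmem.2.2⟩
        rw [heq, lintegral_indicator measurableSet_Ioo, setLIntegral_const, Real.volume_Ioo,
          indicator_of_mem (mem_Iio.2 hx), ← ENNReal.ofReal_mul (Real.exp_pos _).le]
        congr 1
        rw [hc0]
        field_simp
        ring
      · have heq : (fun y => T.indicator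
            (fun p : ℝ × ℝ => ENNReal.ofReal (Real.exp (2 * p.1))) (x, y)) = fun _ => 0 := by
          funext y
          rw [indicator_of_notMem]
          intro hmem
          exact hx hmem.1
        rw [heq, lintegral_const, zero_mul, indicator_of_notMem (by simpa using hx)]
    simp only [inner]
    rw [lintegral_indicator measurableSet_Iio]
    have hint : Integrable (fun x => Real.exp (2 * x) * c0)
        (volume.restrict (Iio (Real.log R))) :=
      (((integrableOn_exp_two_mul_Iic (Real.log R)).mono_set
        Iio_subset_Iic_self).mul_const c0)
    rw [← ofReal_integral_eq_lintegral_ofReal hint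
      (Filter.Eventually.of_forall fun x => by positivity)]
    congr 1
    rw [MeasureTheory.integral_mul_const,
      setIntegral_congr_set Iio_ae_eq_Iic, integral_exp_two_mul_Iic]
    have hexp : Real.exp (2 * Real.log R) = R ^ 2 := by
      rw [show (2:ℝ) * Real.log R = Real.log R + Real.log R by ring, Real.exp_add,
        Real.exp_log hR]
      ring
    rw [hexp, hc0]
    field_simp
  rw [MeasureTheory.integral_eq_lintegral_of_nonneg_ae
      (Filter.Eventually.of_forall fun x => (Real.exp_pos _).le)
      ((Real.continuous_exp.comp
        (continuous_const.mul Complex.continuous_re) :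
          Continuous fun w : ℂ => Real.exp (2 * w.re)).aestronglyMeasurable),
    key, ENNReal.toReal_ofReal, Complex.sq_norm, ← hsdef]
  exact mul_nonneg (div_nonneg (mul_nonneg (sub_pos.2 hβγ).le hs.le) (by positivity))
    (by positivity)
end

section
/- Let α ∈ (0, 2π], let L ∈ ℝ, and set κ = L/α, η = (α − iL)/(2π), and ρ = (α² + L²)/(πα). Let a ∈ ℂ ∖ {0}, write r = |a|, and let θ be the unique real number with κ·log r ≤ θ < κ·log r + 2π and a = r·e^{iθ}. Then |exp(η·(log r + iθ))| = r^{ρ/2} · e^{L·(θ − κ·log r)/(2π)}; in particular |exp(η·(log r + iθ))| ≤ e^{|L|} · r^{ρ/2}, so the spiral branch a^η satisfies |a^η| = O(|a|^{ρ/2}). (Proposition 3.5.) -/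
open Real

/-- Proposition 3.5: with `κ = L/α`, `η = (α - iL)/(2π)`, `ρ = (α² + L²)/(πα)`, and the
spiral branch of the argument `θ ∈ [κ log r, κ log r + 2π)` of `a` (`r = |a|`), one has
`|a^η| = r^{ρ/2} e^{L(θ - κ log r)/(2π)} ≤ e^{|L|} r^{ρ/2}`, so `|a^η| = O(|a|^{ρ/2})`. -/
theorem abs_spiral_power (α L : ℝ) (hα0 : 0 < α) (hα2 : α ≤ 2 * π)
    (κ : ℝ) (hκ : κ = L / α)
    (η : ℂ) (hη : η = (α - Complex.I * L) / (2 * π))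
    (ρ : ℝ) (hρ : ρ = (α ^ 2 + L ^ 2) / (π * α))
    (a : ℂ) (ha : a ≠ 0) (r : ℝ) (hr : r = ‖a‖)
    (θ : ℝ) (hθ₁ : κ * Real.log r ≤ θ) (hθ₂ : θ < κ * Real.log r + 2 * π)
    (haθ : a = (r : ℂ) * Complex.exp (Complex.I * θ)) :
    ‖Complex.exp (η * (Real.log r + Complex.I * θ))‖
        = r ^ (ρ / 2) * Real.exp (L * (θ - κ * Real.log r) / (2 * π)) ∧
      ‖Complex.exp (η * (Real.log r + Complex.I * θ))‖
        ≤ Real.exp |L| * r ^ (ρ / 2) := by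
  have hπ : (0:ℝ) < π := Real.pi_pos
  have hπ' : π ≠ 0 := hπ.ne'
  have hα' : α ≠ 0 := hα0.ne'
  have hrpos : 0 < r := by
    rw [hr]; exact (norm_pos_iff.mpr ha)
  have hre : (η * (Real.log r + Complex.I * θ)).re
      = (α * Real.log r + L * θ) / (2 * π) := by
    subst hη
    have h : (((α:ℂ) - Complex.I * L) / (2 * π)) * (Real.log r + Complex.I * θ)
        = (((α * Real.log r + L * θ) / (2*π) : ℝ) : ℂ)
          + (((α * θ - L * Real.log r)/(2*π) : ℝ) : ℂ) * Complex.I := by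
      have h2 : ((2:ℂ) * π) ≠ 0 := by
        simp [Complex.ofReal_ne_zero, hπ']
      field_simp
      ring_nf
      simp [Complex.I_sq]
      ring
      have hπc : (π:ℂ) ≠ 0 := Complex.ofReal_ne_zero.mpr hπ'
      simp only [mul_inv_cancel_right₀ hπc]
    rw [h, Complex.add_re, Complex.ofReal_re, Complex.mul_re, Complex.ofReal_re,
      Complex.ofReal_im, Complex.I_re, Complex.I_im]
    ring
  have habs : ‖Complex.exp (η * (Real.log r + Complex.I * θ))‖
      = Real.exp ((α * Real.log r + L * θ) / (2 * π)) := by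
    rw [Complex.norm_exp, hre]
  have hrpow : r ^ (ρ / 2) = Real.exp ((ρ / 2) * Real.log r) := by
    rw [Real.rpow_def_of_pos hrpos, mul_comm]
  have hkey : (α * Real.log r + L * θ) / (2 * π)
      = (ρ / 2) * Real.log r + L * (θ - κ * Real.log r) / (2 * π) := by
    subst hρ hκ
    field_simp
    ring
  constructor
  · rw [habs, hrpow, ← Real.exp_add, hkey]
  · rw [habs, hrpow, ← Real.exp_add, hkey]
    apply Real.exp_le_exp.mpr
    have h1 : L * (θ - κ * Real.log r) ≤ |L| * (2 * π) := by
      calc L * (θ - κ * Real.log r) ≤ |L * (θ - κ * Real.log r)| := le_abs_self _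
        _ = |L| * |θ - κ * Real.log r| := abs_mul _ _
        _ ≤ |L| * (2 * π) := by
            apply mul_le_mul_of_nonneg_left _ (abs_nonneg _)
            rw [abs_of_nonneg (by linarith)]
            linarith
    have h2 : L * (θ - κ * Real.log r) / (2 * π) ≤ |L| := by
      rw [div_le_iff₀ (by positivity)]
      linarith
    linarith
end
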